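/- Let P and Q be forcing posets, N a set, p a universal strongly (N,P)-generic condition, and q a universal strongly (N,Q)-generic condition. Then (p,q) is a universal strongly (N, P × Q)-generic condition. -/
import Mathlib


/-- Two conditions are compatible if they have a common lower bound. -/
def Compat {Q : Type*} [Preorder Q] (x y : Q) : Prop := ∃ z, z ≤ x ∧ z ≤ y

/-- Compatibility within a subposet `P`. -/
def CompatIn {Q : Type*} [Preorder Q] (P : Set Q) (x y : Q) : Prop :=
  ∃ z ∈ P, z ≤ x ∧ z ≤ y

/-- `A` is a maximal antichain of the subposet `P`. -/
def IsMaxAntichainIn {Q : Type*} [Preorder Q] (P A : Set Q) : Prop :=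
  A ⊆ P ∧ (∀ a ∈ A, ∀ b ∈ A, a ≠ b → ¬ CompatIn P a b) ∧
    ∀ p ∈ P, ∃ a ∈ A, CompatIn P p a

/-- `G` is a filter on the subposet `P`. -/
def IsFilterOn {Q : Type*} [Preorder Q] (P G : Set Q) : Prop :=
  G ⊆ P ∧ G.Nonempty ∧ (∀ p ∈ G, ∀ q ∈ P, p ≤ q → q ∈ G) ∧
    ∀ p ∈ G, ∀ q ∈ G, ∃ r ∈ G, r ≤ p ∧ r ≤ q

/-- `G` is a (V-)generic filter on the subposet `P`: it meets every
maximal antichain of `P` (all of which lie in the ground model `V`). -/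
def IsGenericOn {Q : Type*} [Preorder Q] (P G : Set Q) : Prop :=
  IsFilterOn P G ∧ ∀ A : Set Q, IsMaxAntichainIn P A → (G ∩ A).Nonempty

/-- `P` is a regular suborder of `Q`: elements of `P` compatible in `Q` are
compatible in `P`, and every maximal antichain of `P` is a maximal antichain of `Q`. -/
def IsRegularSuborder {Q : Type*} [Preorder Q] (P : Set Q) : Prop :=
  (∀ p ∈ P, ∀ q ∈ P, Compat p q → CompatIn P p q) ∧
    ∀ A : Set Q, IsMaxAntichainIn P A → IsMaxAntichainIn Set.univ A

/-- `q` is a strongly `N`-generic condition: every set `D` dense in the subposet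
`N ∩ Q` (here `N` denotes the trace `N ∩ Q`, a set of conditions) is predense
in `Q` below `q`. -/
def StronglyGeneric {Q : Type*} [Preorder Q] (N : Set Q) (q : Q) : Prop :=
  ∀ D : Set Q, D ⊆ N → (∀ p ∈ N, ∃ d ∈ D, d ≤ p) →
    ∀ r, r ≤ q → ∃ d ∈ D, Compat r d

/-- if `p` is a universal strongly `(N,P)`-generic condition and
`q` is a universal strongly `(N,Q)`-generic condition (universality: compatible
with every element of the trace of `N`), then `(p,q)` is a universal strongly
`(N, P × Q)`-generic condition, where `N ∩ (P × Q)` is identified with pairs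
from `N ∩ P` and `N ∩ Q`. -/
theorem stmt_11 {P Q : Type*} [Preorder P] [Preorder Q]
    (NP : Set P) (NQ : Set Q) (p : P) (q : Q)
    (hp : StronglyGeneric NP p) (hpu : ∀ x ∈ NP, Compat x p)
    (hq : StronglyGeneric NQ q) (hqu : ∀ x ∈ NQ, Compat x q) :
    StronglyGeneric (NP ×ˢ NQ) (p, q) ∧ ∀ x ∈ NP ×ˢ NQ, Compat x (p, q) := by
  constructor
  · intro D hDsub hDdense r hr
    obtain ⟨r₁, r₂⟩ := r
    have hr₁ : r₁ ≤ p := hr.1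
    have hr₂ : r₂ ≤ q := hr.2
    set E : Set P := {a | a ∈ NP ∧ ∃ b, (a, b) ∈ D ∧ Compat r₂ b} with hE
    have hEdense : ∀ a₀ ∈ NP, ∃ a ∈ E, a ≤ a₀ := by
      intro a₀ ha₀
      set F : Set Q := {b | b ∈ NQ ∧ ∃ a ∈ NP, a ≤ a₀ ∧ (a, b) ∈ D} with hF
      have hFdense : ∀ b₀ ∈ NQ, ∃ b ∈ F, b ≤ b₀ := by
        intro b₀ hb₀
        obtain ⟨⟨a, b⟩, hdD, hdle⟩ := hDdense (a₀, b₀) ⟨ha₀, hb₀⟩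
        exact ⟨b, ⟨(hDsub hdD).2, a, (hDsub hdD).1, hdle.1, hdD⟩, hdle.2⟩
      obtain ⟨b, ⟨hbN, a, haN, hale, habD⟩, hcompat⟩ :=
        hq F (fun b hb => hb.1) hFdense r₂ hr₂
      exact ⟨a, ⟨haN, b, habD, hcompat⟩, hale⟩
    obtain ⟨a, ⟨haN, b, habD, s₂, hs₂r, hs₂b⟩, s₁, hs₁r, hs₁a⟩ :=
      hp E (fun a ha => ha.1) hEdense r₁ hr₁
    exact ⟨(a, b), habD, (s₁, s₂), ⟨hs₁r, hs₂r⟩, ⟨hs₁a, hs₂b⟩⟩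
  · rintro ⟨x₁, x₂⟩ ⟨hx₁, hx₂⟩
    obtain ⟨z₁, hz₁x, hz₁p⟩ := hpu x₁ hx₁
    obtain ⟨z₂, hz₂x, hz₂q⟩ := hqu x₂ hx₂
    exact ⟨(z₁, z₂), ⟨hz₁x, hz₂x⟩, ⟨hz₁p, hz₂q⟩⟩
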